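/- Let n ≥ 1. Let SO(3) be the group of 3×3 real orthogonal matrices of determinant 1, with its subspace topology, and let ρ : T → SO(3) be the homomorphism sending t ∈ T = ℝ/ℤ to the rotation by angle 2πt about the third coordinate axis (so ρ identifies T with the subgroup SO(2) ⊂ SO(3)). Let T act continuously on SO(3) × Tⁿ by t·(g, x) = (g·ρ(t)⁻¹, x + Δ(t)). Then the orbit space (SO(3) × Tⁿ)/T — that is, SO(3) ×_{SO(2)} SO(2)ⁿ — is homeomorphic to the product SO(3) × (P/Λ). -/

import Mathlib

open Real in
/-- Rotation by angle `2πs` about the third coordinate axis, i.e. the image of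
`s ∈ T = ℝ/ℤ` under the standard identification of `T` with `SO(2) ⊂ SO(3)`. -/
noncomputable def rot3 (s : ℝ) : Matrix (Fin 3) (Fin 3) ℝ :=
  !![Real.cos (2 * Real.pi * s), -Real.sin (2 * Real.pi * s), 0;
     Real.sin (2 * Real.pi * s),  Real.cos (2 * Real.pi * s), 0;
     0, 0, 1]

/-- `SO(3)`: real orthogonal `3 × 3` matrices of determinant `1`, topologized as a
subspace of the space of matrices. -/
abbrev SO3 : Type := {A : Matrix (Fin 3) (Fin 3) ℝ // A * A.transpose = 1 ∧ A.det = 1}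

/-- The orbit relation on `SO(3) × Tⁿ` of the circle action
`t • (g, x) = (g ⬝ ρ(t)⁻¹, x + Δ(t))`, where `ρ : T → SO(3)` is rotation about the third
axis and `Δ` is the diagonal; here `Tⁿ = ℝⁿ/ℤⁿ` is modelled as `Fin n → AddCircle 1`,
and (since `ρ(s)` is orthogonal) `b.1 = a.1 ⬝ ρ(s)⁻¹` is written as `a.1 = b.1 ⬝ ρ(s)`. -/
def so3TorusRel (n : ℕ) (a b : SO3 × (Fin n → AddCircle (1 : ℝ))) : Prop :=
  ∃ s : ℝ, (a.1 : Matrix (Fin 3) (Fin 3) ℝ) = (b.1 : Matrix (Fin 3) (Fin 3) ℝ) * rot3 s ∧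
    b.2 = a.2 + fun _ => (s : AddCircle (1 : ℝ))

/-- The relation on the sum-zero hyperplane `P ⊂ ℝⁿ` of translation by the lattice
`Λ = π(ℤⁿ)`, where `π` is orthogonal projection of `ℝⁿ` onto `P`; its quotient is `P/Λ`. -/
def hyperplaneLatticeRel (n : ℕ) (p q : {v : Fin n → ℝ // ∑ i, v i = 0}) : Prop :=
  ∃ m : Fin n → ℤ,
    (q : Fin n → ℝ) = (p : Fin n → ℝ) + fun i => (m i : ℝ) - (∑ j, (m j : ℝ)) / n

namespace So3Helper

set_option linter.unnecessarySeqFocus false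
set_option linter.unusedTactic false

/-! ### rot3 lemmas -/

lemma rot3_mul (s t : ℝ) : rot3 s * rot3 t = rot3 (s + t) := by
  rw [rot3, rot3, rot3, Matrix.mul_fin_three]
  have h : 2 * Real.pi * (s + t) = 2 * Real.pi * s + 2 * Real.pi * t := by ring
  rw [h, Real.cos_add, Real.sin_add]
  congr 1 <;> ring

lemma rot3_zero : rot3 0 = 1 := by
  rw [rot3, Matrix.one_fin_three]
  norm_num

lemma rot3_transpose (s : ℝ) : (rot3 s).transpose = rot3 (-s) := by
  ext i j
  fin_cases i <;> fin_cases j <;> simp [rot3, Matrix.transpose_apply, mul_neg]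

lemma rot3_det (s : ℝ) : (rot3 s).det = 1 := by
  simp [rot3, Matrix.det_fin_three]
  ring_nf
  rw [← Real.sin_sq_add_cos_sq (2 * Real.pi * s)]; ring

lemma rot3_int (s : ℝ) (z : ℤ) : rot3 (s + z) = rot3 s := by
  have h : 2 * Real.pi * (s + z) = 2 * Real.pi * s + z * (2 * Real.pi) := by ring
  rw [rot3, rot3, h, Real.cos_add_int_mul_two_pi, Real.sin_add_int_mul_two_pi]

noncomputable def so3mul (g : SO3) (s : ℝ) : SO3 :=
  ⟨g.1 * rot3 s, by
    constructor
    · rw [Matrix.transpose_mul, rot3_transpose, Matrix.mul_assoc, ← Matrix.mul_assoc (rot3 s),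
        rot3_mul, add_neg_cancel, rot3_zero, Matrix.one_mul, g.2.1]
    · rw [Matrix.det_mul, rot3_det, g.2.2, one_mul]⟩

lemma so3mul_val (g : SO3) (s : ℝ) : (so3mul g s).1 = g.1 * rot3 s := rfl

lemma so3mul_so3mul (g : SO3) (s t : ℝ) : so3mul (so3mul g s) t = so3mul g (s + t) := by
  apply Subtype.ext
  rw [so3mul_val, so3mul_val, so3mul_val, Matrix.mul_assoc, rot3_mul]

lemma continuous_rot3 : Continuous rot3 := by
  apply continuous_matrix
  intro i j
  fin_cases i <;> fin_cases j <;> simp [rot3] <;> fun_prop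

/-! ### AddCircle lemmas -/

lemma coe_int_addCircle (z : ℤ) : ((z : ℝ) : AddCircle (1:ℝ)) = 0 := by
  rw [QuotientAddGroup.eq_zero_iff]
  exact ⟨z, by simp⟩

lemma addCircle_coe_eq_iff (a b : ℝ) :
    ((a : AddCircle (1:ℝ)) = (b : AddCircle (1:ℝ))) ↔ ∃ z : ℤ, b = a + z := by
  rw [QuotientAddGroup.eq_iff_sub_mem]
  simp only [AddSubgroup.mem_zmultiples_iff, zsmul_eq_mul, mul_one]
  constructor
  · rintro ⟨z, hz⟩; exact ⟨-z, by push_cast; linarith⟩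
  · rintro ⟨z, hz⟩; exact ⟨-z, by push_cast; linarith⟩

lemma addCircle_coe_add (a b : ℝ) :
    ((a + b : ℝ) : AddCircle (1:ℝ)) = (a : AddCircle (1:ℝ)) + (b : AddCircle (1:ℝ)) := rfl

lemma addCircle_out_coe (q : AddCircle (1:ℝ)) : ((q.out : ℝ) : AddCircle (1:ℝ)) = q :=
  QuotientAddGroup.out_eq' q

/-! ### the hyperplane -/

variable {n : ℕ}

abbrev P (n : ℕ) := {v : Fin n → ℝ // ∑ i, v i = 0}

noncomputable def vec (n : ℕ) (m : Fin n → ℤ) : Fin n → ℝ :=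
  fun i => (m i : ℝ) - (∑ j, (m j : ℝ)) / n

lemma sum_vec (hn : 1 ≤ n) (m : Fin n → ℤ) : ∑ i, vec n m i = 0 := by
  have hne : (n : ℝ) ≠ 0 := Nat.cast_ne_zero.2 (by omega)
  simp only [vec, Finset.sum_sub_distrib, Finset.sum_const, Finset.card_univ, Fintype.card_fin,
    nsmul_eq_mul]
  field_simp
  ring

noncomputable def piv (n : ℕ) (x : Fin n → ℝ) : Fin n → ℝ := fun i => x i - (∑ j, x j) / n

lemma sum_piv (hn : 1 ≤ n) (x : Fin n → ℝ) : ∑ i, piv n x i = 0 := by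
  have hne : (n : ℝ) ≠ 0 := Nat.cast_ne_zero.2 (by omega)
  simp only [piv, Finset.sum_sub_distrib, Finset.sum_const, Finset.card_univ, Fintype.card_fin,
    nsmul_eq_mul]
  field_simp
  ring

lemma hyperRel_equivalence : Equivalence (hyperplaneLatticeRel n) := by
  constructor
  · intro p
    exact ⟨0, by funext i; simp⟩
  · rintro p q ⟨m, hm⟩
    refine ⟨-m, ?_⟩
    funext i
    have h := congrFun hm i
    simp only [Pi.add_apply, Pi.neg_apply] at h ⊢
    push_cast
    rw [h, Finset.sum_neg_distrib]
    ring
  · rintro p q r ⟨m, hm⟩ ⟨m', hm'⟩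
    refine ⟨m + m', ?_⟩
    funext i
    have h1 := congrFun hm i
    have h2 := congrFun hm' i
    simp only [Pi.add_apply] at h1 h2 ⊢
    push_cast
    rw [h2, h1, Finset.sum_add_distrib]
    ring

lemma hyper_mk_eq_iff (p q : P n) :
    Quot.mk (hyperplaneLatticeRel n) p = Quot.mk (hyperplaneLatticeRel n) q ↔
      hyperplaneLatticeRel n p q :=
  Quot.eq.trans hyperRel_equivalence.eqvGen_iff

/-- translation by `vec n m` as a homeomorphism of `P n`. -/
noncomputable def trHomeo (hn : 1 ≤ n) (m : Fin n → ℤ) : P n ≃ₜ P n where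
  toFun p := ⟨p.1 + vec n m, by
    simp only [Pi.add_apply]
    rw [Finset.sum_add_distrib, p.2, sum_vec hn, add_zero]⟩
  invFun p := ⟨p.1 - vec n m, by
    simp only [Pi.sub_apply]
    rw [Finset.sum_sub_distrib, p.2, sum_vec hn, sub_zero]⟩
  left_inv p := by apply Subtype.ext; simp
  right_inv p := by apply Subtype.ext; simp
  continuous_toFun := by
    apply Continuous.subtype_mk
    exact continuous_subtype_val.add continuous_const
  continuous_invFun := by
    apply Continuous.subtype_mk
    exact continuous_subtype_val.sub continuous_const

lemma isOpenMap_hyper_mk (hn : 1 ≤ n) : IsOpenMap (Quot.mk (hyperplaneLatticeRel n)) := by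
  intro U hU
  rw [isOpen_coinduced]
  have key : (Quot.mk (hyperplaneLatticeRel n)) ⁻¹' (Quot.mk (hyperplaneLatticeRel n) '' U) =
      ⋃ m : Fin n → ℤ, (trHomeo hn m) '' U := by
    ext q
    simp only [Set.mem_preimage, Set.mem_image, Set.mem_iUnion]
    constructor
    · rintro ⟨p, hp, hpq⟩
      obtain ⟨m, hm⟩ := (hyper_mk_eq_iff p q).1 hpq
      exact ⟨m, p, hp, Subtype.ext hm.symm⟩
    · rintro ⟨m, p, hp, hpq⟩
      refine ⟨p, hp, (hyper_mk_eq_iff p q).2 ⟨m, ?_⟩⟩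
      rw [← hpq]
      rfl
  rw [key]
  exact isOpen_iUnion fun m => (trHomeo hn m).isOpenMap U hU

lemma isOpenQuotientMap_hyper_mk (hn : 1 ≤ n) :
    IsOpenQuotientMap (Quot.mk (hyperplaneLatticeRel n)) :=
  ⟨Quot.exists_rep, continuous_quot_mk, isOpenMap_hyper_mk hn⟩

/-! ### the forward map -/

noncomputable def Fdef (hn : 1 ≤ n) : SO3 × (Fin n → ℝ) → SO3 × Quot (hyperplaneLatticeRel n) :=
  fun z => (so3mul z.1 (z.2 ⟨0, hn⟩),
    Quot.mk _ ⟨piv n z.2, sum_piv hn z.2⟩)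

lemma Fdef_eq (hn : 1 ≤ n) (g : SO3) (x : Fin n → ℝ) :
    Fdef hn (g, x) = (so3mul g (x ⟨0, hn⟩), Quot.mk _ ⟨piv n x, sum_piv hn x⟩) := rfl

lemma Fdef_const (hn : 1 ≤ n) (g : SO3) (x y : Fin n → ℝ)
    (h : ∀ i, ((x i : AddCircle (1:ℝ))) = (y i : AddCircle (1:ℝ))) :
    Fdef hn (g, x) = Fdef hn (g, y) := by
  choose m hm using fun i => (addCircle_coe_eq_iff (x i) (y i)).1 (h i)
  have hsum : ∑ j, y j = ∑ j, x j + ∑ j, (m j : ℝ) := by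
    rw [← Finset.sum_add_distrib]
    exact Finset.sum_congr rfl fun j _ => hm j
  rw [Fdef_eq, Fdef_eq]
  rw [Prod.mk.injEq]
  refine ⟨?_, ?_⟩
  · apply Subtype.ext
    rw [so3mul_val, so3mul_val, hm ⟨0, hn⟩, rot3_int]
  · apply Quot.sound
    refine ⟨m, ?_⟩
    funext i
    simp only [Pi.add_apply, piv]
    rw [hm i, hsum]
    ring

noncomputable def F1 (hn : 1 ≤ n) :
    SO3 × (Fin n → AddCircle (1:ℝ)) → SO3 × Quot (hyperplaneLatticeRel n) :=
  fun z => Fdef hn (z.1, fun i => (z.2 i).out)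

lemma F1_mk (hn : 1 ≤ n) (g : SO3) (x : Fin n → ℝ) :
    F1 hn (g, fun i => (x i : AddCircle (1:ℝ))) = Fdef hn (g, x) := by
  apply Fdef_const
  intro i
  exact addCircle_out_coe _

lemma F1_compat (hn : 1 ≤ n) (a b : SO3 × (Fin n → AddCircle (1:ℝ)))
    (hab : so3TorusRel n a b) : F1 hn a = F1 hn b := by
  obtain ⟨s, hg, hx⟩ := hab
  obtain ⟨g, x⟩ := a
  obtain ⟨g', x'⟩ := b
  simp only at hg hx
  set u : Fin n → ℝ := fun i => (x i).out with hu
  have h1 : F1 hn (g, x) = Fdef hn (g, u) := rfl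
  have h2 : F1 hn (g', x') = Fdef hn (g', fun i => u i + s) := by
    have h0 : F1 hn (g', x') = Fdef hn (g', fun i => (x' i).out) := rfl
    rw [h0]
    apply Fdef_const
    intro i
    rw [addCircle_out_coe, hx]
    simp only [Pi.add_apply]
    rw [addCircle_coe_add, hu]
    rw [addCircle_out_coe]
  rw [h1, h2, Fdef_eq, Fdef_eq]
  rw [Prod.mk.injEq]
  refine ⟨?_, ?_⟩
  · apply Subtype.ext
    rw [so3mul_val, so3mul_val, hg, Matrix.mul_assoc, rot3_mul]
    congr 2
    ring
  · congr 1
    apply Subtype.ext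
    funext i
    have hne : (n : ℝ) ≠ 0 := Nat.cast_ne_zero.2 (by omega)
    simp only [piv, Finset.sum_add_distrib, Finset.sum_const, Finset.card_univ, Fintype.card_fin,
      nsmul_eq_mul]
    field_simp
    ring

noncomputable def Fmap (hn : 1 ≤ n) :
    Quot (so3TorusRel n) → SO3 × Quot (hyperplaneLatticeRel n) :=
  Quot.lift (F1 hn) (F1_compat hn)

/-! ### the backward map -/

noncomputable def Gdef (hn : 1 ≤ n) (h : SO3) (p : P n) : Quot (so3TorusRel n) :=
  Quot.mk _ (so3mul h (-(p.1 ⟨0, hn⟩)), fun i => (p.1 i : AddCircle (1:ℝ)))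

lemma Gdef_compat (hn : 1 ≤ n) (h : SO3) (p q : P n)
    (hpq : hyperplaneLatticeRel n p q) : Gdef hn h p = Gdef hn h q := by
  obtain ⟨m, hm⟩ := hpq
  apply Quot.sound
  refine ⟨-(∑ j, (m j : ℝ)) / n, ?_, ?_⟩
  · simp only [so3mul_val]
    rw [Matrix.mul_assoc, rot3_mul]
    have hq0 : q.1 ⟨0, hn⟩ = p.1 ⟨0, hn⟩ + ((m ⟨0, hn⟩ : ℝ) - (∑ j, (m j : ℝ)) / n) :=
      congrFun hm ⟨0, hn⟩
    rw [hq0]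
    have heq : -(p.1 ⟨0, hn⟩ + ((m ⟨0, hn⟩ : ℝ) - (∑ j, (m j : ℝ)) / n)) +
        -(∑ j, (m j : ℝ)) / n = -(p.1 ⟨0, hn⟩) + ((-(m ⟨0, hn⟩) : ℤ) : ℝ) := by
      push_cast
      ring
    rw [heq, rot3_int]
  · funext i
    simp only [Pi.add_apply]
    have hqi : q.1 i = (p.1 i + (-(∑ j, (m j : ℝ)) / n)) + ((m i : ℤ) : ℝ) := by
      have h := congrFun hm i
      simp only [Pi.add_apply] at h
      rw [h]; push_cast; ring
    rw [hqi, addCircle_coe_add, addCircle_coe_add, coe_int_addCircle, add_zero]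

noncomputable def Gmap (hn : 1 ≤ n) :
    SO3 × Quot (hyperplaneLatticeRel n) → Quot (so3TorusRel n) :=
  fun z => Quot.lift (Gdef hn z.1) (Gdef_compat hn z.1) z.2

/-! ### inverse properties -/

lemma piv_of_sum_zero (x : Fin n → ℝ) (hx : ∑ i, x i = 0) : piv n x = x := by
  funext i
  simp [piv, hx]

lemma right_inv (hn : 1 ≤ n) (z : SO3 × Quot (hyperplaneLatticeRel n)) :
    Fmap hn (Gmap hn z) = z := by
  obtain ⟨h, q⟩ := z
  induction q using Quot.ind with
  | mk p =>
    show Fmap hn (Gdef hn h p) = (h, Quot.mk _ p)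
    have h1 : Fmap hn (Gdef hn h p) =
        F1 hn (so3mul h (-(p.1 ⟨0, hn⟩)), fun i => (p.1 i : AddCircle (1:ℝ))) := rfl
    rw [h1, F1_mk, Fdef_eq, Prod.mk.injEq]
    refine ⟨?_, ?_⟩
    · rw [so3mul_so3mul, neg_add_cancel]
      apply Subtype.ext
      rw [so3mul_val, rot3_zero, Matrix.mul_one]
    · congr 1
      apply Subtype.ext
      exact piv_of_sum_zero p.1 p.2

lemma left_inv (hn : 1 ≤ n) (z : Quot (so3TorusRel n)) :
    Gmap hn (Fmap hn z) = z := by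
  induction z using Quot.ind with
  | mk a =>
    obtain ⟨g, x⟩ := a
    set u : Fin n → ℝ := fun i => (x i).out with hu
    have h1 : Fmap hn (Quot.mk _ (g, x)) = Fdef hn (g, u) := rfl
    rw [h1, Fdef_eq]
    have h2 : Gmap hn (so3mul g (u ⟨0, hn⟩), Quot.mk _ (⟨piv n u, sum_piv hn u⟩ : P n)) =
        Gdef hn (so3mul g (u ⟨0, hn⟩)) ⟨piv n u, sum_piv hn u⟩ := rfl
    rw [h2]
    unfold Gdef
    apply Quot.sound
    refine ⟨(∑ j, u j) / n, ?_, ?_⟩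
    · simp only [so3mul_so3mul, so3mul_val, piv]
      congr 2
      ring
    · funext i
      simp only [Pi.add_apply, piv]
      rw [← addCircle_coe_add]
      have heq : u i - (∑ j, u j) / n + (∑ j, u j) / n = u i := by ring
      rw [heq, hu]
      exact (addCircle_out_coe (x i)).symm

/-! ### continuity -/

lemma isOpenQuotientMap_torus_mk :
    IsOpenQuotientMap (fun (x : Fin n → ℝ) (i : Fin n) => ((x i : AddCircle (1:ℝ)))) :=
  IsOpenQuotientMap.piMap fun _ => QuotientAddGroup.isOpenQuotientMap_mk

lemma continuous_Fdef (hn : 1 ≤ n) : Continuous (Fdef hn) := by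
  unfold Fdef
  apply Continuous.prodMk
  · apply Continuous.subtype_mk
    exact (continuous_subtype_val.comp continuous_fst).matrix_mul
      (continuous_rot3.comp ((continuous_apply _).comp continuous_snd))
  · apply continuous_quot_mk.comp
    apply Continuous.subtype_mk
    apply continuous_pi
    intro i
    exact ((continuous_apply i).comp continuous_snd).sub
      (((continuous_finset_sum _ fun j _ => continuous_apply j).comp continuous_snd).div_const _)

lemma continuous_Fmap (hn : 1 ≤ n) : Continuous (Fmap hn) := by
  rw [isQuotientMap_quot_mk.continuous_iff]
  show Continuous (F1 hn)
  rw [(IsOpenQuotientMap.id.prodMap isOpenQuotientMap_torus_mk).isQuotientMap.continuous_iff]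
  have key : (F1 hn) ∘ (Prod.map id (fun (x : Fin n → ℝ) (i : Fin n) => ((x i : AddCircle (1:ℝ))))) =
      Fdef hn := by
    funext z
    exact F1_mk hn z.1 z.2
  rw [key]
  exact continuous_Fdef hn

lemma continuous_Gmap (hn : 1 ≤ n) : Continuous (Gmap hn) := by
  rw [(IsOpenQuotientMap.id.prodMap (isOpenQuotientMap_hyper_mk hn)).isQuotientMap.continuous_iff]
  have key : (Gmap hn) ∘ (Prod.map id (Quot.mk (hyperplaneLatticeRel n))) =
      fun (z : SO3 × P n) => Gdef hn z.1 z.2 := rfl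
  rw [key]
  unfold Gdef
  apply continuous_quot_mk.comp
  apply Continuous.prodMk
  · apply Continuous.subtype_mk
    exact (continuous_subtype_val.comp continuous_fst).matrix_mul
      (continuous_rot3.comp (((continuous_apply _).comp
        (continuous_subtype_val.comp continuous_snd)).neg))
  · apply continuous_pi
    intro i
    exact QuotientAddGroup.isOpenQuotientMap_mk.continuous.comp
      ((continuous_apply i).comp (continuous_subtype_val.comp continuous_snd))

end So3Helper

/-- **Section 11, Proposition.** For `n ≥ 1`, the orbit space
`(SO(3) × Tⁿ)/T = SO(3) ×_{SO(2)} SO(2)ⁿ` of the circle action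
`t • (g,x) = (g ρ(t)⁻¹, x + Δ(t))` is homeomorphic to the product `SO(3) × (P/Λ)`. -/
theorem so3_torus_quotient_homeomorph (n : ℕ) (hn : 1 ≤ n) :
    Nonempty (Quot (so3TorusRel n) ≃ₜ SO3 × Quot (hyperplaneLatticeRel n)) := by
  exact ⟨⟨⟨So3Helper.Fmap hn, So3Helper.Gmap hn, So3Helper.left_inv hn, So3Helper.right_inv hn⟩,
    So3Helper.continuous_Fmap hn, So3Helper.continuous_Gmap hn⟩⟩
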